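/- Let V ⊆ ℝ^n be a regular space with capacity c, f a feasible flow, P a shortest augmenting path for f, and g the result of maximally augmenting f along P. Then the minimum length of an augmenting path for g (if one exists) is at least the minimum length of an augmenting path for f; i.e., shortest augmenting path length is nondecreasing over augmentations. -/

import Mathlib

open Finset

variable {n : ℕ}

/-- The support of a vector. -/
def supp (x : Fin n → ℝ) : Set (Fin n) := {j | x j ≠ 0}

/-- A nonzero vector of `V` is elementary if no nonzero vector of `V` has support
properly contained in its support. -/
def IsElementary (V : Submodule ℝ (Fin n → ℝ)) (x : Fin n → ℝ) : Prop :=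
  x ∈ V ∧ x ≠ 0 ∧ ∀ y ∈ V, y ≠ 0 → ¬ (supp y ⊂ supp x)

/-- A primitive vector: elementary with entries in `{-1, 0, 1}`. -/
def IsPrimitive (V : Submodule ℝ (Fin n → ℝ)) (x : Fin n → ℝ) : Prop :=
  IsElementary V x ∧ ∀ j, x j ∈ ({-1, 0, 1} : Set ℝ)

/-- `y` conforms to `x`. -/
def Conforms (y x : Fin n → ℝ) : Prop := ∀ j, y j ≠ 0 → y j * x j > 0

/-- A regular space: the kernel of a totally unimodular matrix. -/
def IsRegularSpace (V : Submodule ℝ (Fin n → ℝ)) : Prop :=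
  ∃ (m : ℕ) (A : Matrix (Fin m) (Fin n) ℝ),
    A.IsTotallyUnimodular ∧ V = LinearMap.ker A.mulVecLin

/-- An `r`-path: a primitive vector with value `+1` at `r`. -/
def IsRPath (V : Submodule ℝ (Fin n → ℝ)) (r : Fin n) (P : Fin n → ℝ) : Prop :=
  IsPrimitive V P ∧ P r = 1

/-- Feasibility with respect to capacity `c` (no constraint at `r`). -/
def Feasible (c : Fin n → ℝ) (r : Fin n) (f : Fin n → ℝ) : Prop :=
  ∀ j, j ≠ r → 0 ≤ f j ∧ f j ≤ c j

/-- An `r`-path `P` is augmenting for the flow `f`. -/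
def Augmenting (V : Submodule ℝ (Fin n → ℝ)) (c : Fin n → ℝ) (r : Fin n)
    (f P : Fin n → ℝ) : Prop :=
  IsRPath V r P ∧ ∃ ε : ℝ, 0 < ε ∧ Feasible c r (f + ε • P)

/-- The 1-norm. -/
def onorm (x : Fin n → ℝ) : ℝ := ∑ j, |x j|

/-- A shortest augmenting `r`-path. -/
def ShortestAug (V : Submodule ℝ (Fin n → ℝ)) (c : Fin n → ℝ) (r : Fin n)
    (f P : Fin n → ℝ) : Prop :=
  Augmenting V c r f P ∧ ∀ Q, Augmenting V c r f Q → onorm P ≤ onorm Q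

/-- `g` is obtained from `f` by maximal augmentation along `P`. -/
def MaxAug (c : Fin n → ℝ) (r : Fin n) (f P g : Fin n → ℝ) : Prop :=
  ∃ ε : ℝ, 0 < ε ∧ g = f + ε • P ∧ Feasible c r g ∧
    ∀ ε' : ℝ, ε < ε' → ¬ Feasible c r (f + ε' • P)

/-- A conformal primitive decomposition of `P + Q` in which `M` and `J` are the two
`r`-path summands (`M` playing the role of `P ∧ Q` and `J` of `P ∨ Q`). -/
def MeetJoinDecomp (V : Submodule ℝ (Fin n → ℝ)) (r : Fin n)
    (P Q M J : Fin n → ℝ) : Prop :=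
  ∃ (k : ℕ) (p : Fin k → Fin n → ℝ) (a b : Fin k),
    (∀ i, IsPrimitive V (p i)) ∧ (∀ i, Conforms (p i) (P + Q)) ∧
    (∑ i, p i) = P + Q ∧ a ≠ b ∧ p a = M ∧ p b = J ∧
    p a r = 1 ∧ p b r = 1 ∧ ∀ i, p i r = 1 → i = a ∨ i = b

open Matrix Submodule Module in
lemma elem_abs_const {m : ℕ} {A : Matrix (Fin m) (Fin n) ℝ} (hA : A.IsTotallyUnimodular)
    {x : Fin n → ℝ} (hx : IsElementary (LinearMap.ker A.mulVecLin) x) :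
    ∃ a : ℝ, 0 < a ∧ ∀ j, x j ≠ 0 → |x j| = a := by
  classical
  obtain ⟨hxV, hx0, hmin⟩ := hx
  have hxmul : A.mulVec x = 0 := hxV
  -- one-dimensionality of kernel vectors supported in supp x
  have hone : ∀ y, A.mulVec y = 0 → (∀ j, x j = 0 → y j = 0) → ∃ c : ℝ, y = c • x := by
    intro y hy hsupp
    by_cases hy0 : y = 0
    · exact ⟨0, by simp [hy0]⟩
    obtain ⟨j, hj⟩ : ∃ j, y j ≠ 0 := by
      by_contra h; push_neg at h; exact hy0 (funext h)
    have hxj : x j ≠ 0 := fun h => hj (hsupp j h)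
    set z := y - (y j / x j) • x with hz
    have hzV : z ∈ LinearMap.ker A.mulVecLin :=
      sub_mem (show y ∈ LinearMap.ker A.mulVecLin from hy) (smul_mem _ _ hxV)
    have hzj : z j = 0 := by
      simp only [hz, Pi.sub_apply, Pi.smul_apply, smul_eq_mul]
      field_simp
      ring
    have hzsupp : supp z ⊆ supp x := by
      intro i hi
      simp only [supp, Set.mem_setOf_eq] at hi ⊢
      intro hxi
      apply hi
      simp [hz, hxi, hsupp i hxi]
    by_cases hz0 : z = 0
    · exact ⟨y j / x j, sub_eq_zero.mp hz0⟩
    · exact absurd (HasSubset.Subset.ssubset_of_not_subset hzsupp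
        (fun hsub => (hsub (show j ∈ supp x from hxj)) hzj)) (hmin z hzV hz0)
  -- set up the support and column-restricted matrix
  set S : Finset (Fin n) := Finset.univ.filter (fun j => x j ≠ 0) with hSdef
  have hmemS : ∀ j, j ∈ S ↔ x j ≠ 0 := by intro j; simp [hSdef]
  have hSne : S.Nonempty := by
    obtain ⟨j, hj⟩ : ∃ j, x j ≠ 0 := by
      by_contra h; push_neg at h; exact hx0 (funext h)
    exact ⟨j, (hmemS j).mpr hj⟩
  obtain ⟨d, hd⟩ : ∃ d, S.card = d + 1 :=
    Nat.exists_eq_succ_of_ne_zero (Finset.card_pos.mpr hSne).ne'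
  set e := S.orderIsoOfFin hd with he
  set g : Fin (d+1) → Fin n := fun k => (e k : Fin n) with hgdef
  have hgS : ∀ k, g k ∈ S := fun k => (e k).2
  have hxg : ∀ k, x (g k) ≠ 0 := fun k => (hmemS _).mp (hgS k)
  set x' : Fin (d+1) → ℝ := fun k => x (g k) with hx'def
  set N : Matrix (Fin m) (Fin (d+1)) ℝ := A.submatrix id g with hNdef
  set ext : (Fin (d+1) → ℝ) → (Fin n → ℝ) :=
    fun y j => if h : j ∈ S then y (e.symm ⟨j, h⟩) else 0 with hextdef
  have hextg : ∀ y k, ext y (g k) = y k := by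
    intro y k
    have h1 : g k ∈ S := hgS k
    have h2 : e.symm ⟨g k, h1⟩ = k := by
      rw [show (⟨g k, h1⟩ : {a // a ∈ S}) = e k from Subtype.ext rfl]
      exact e.symm_apply_apply k
    simp [hextdef, h1, h2]
  have hext0 : ∀ y j, j ∉ S → ext y j = 0 := by intro y j hj; simp [hextdef, hj]
  have hmulext : ∀ y, A.mulVec (ext y) = N.mulVec y := by
    intro y
    funext i
    show ∑ j, A i j * ext y j = ∑ k, N i k * y k
    rw [← Finset.sum_subset (Finset.subset_univ S)
      (fun j _ hj => by rw [hext0 y j hj, mul_zero])]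
    rw [← Finset.sum_coe_sort S (fun j => A i j * ext y j)]
    rw [← Equiv.sum_comp e.toEquiv]
    refine Finset.sum_congr rfl (fun k _ => ?_)
    show A i (g k) * ext y (g k) = N i k * y k
    rw [hextg, hNdef]; rfl
  have hextx : ext x' = x := by
    funext j
    by_cases hj : j ∈ S
    · have : g (e.symm ⟨j, hj⟩) = j := by
        show ((e (e.symm ⟨j, hj⟩)) : Fin n) = j
        rw [e.apply_symm_apply]
      simp [hextdef, hj, hx'def, this]
    · have : x j = 0 := by_contra fun h => hj ((hmemS j).mpr h)
      simp [hextdef, hj, this]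
  have hx'ker : N.mulVec x' = 0 := by rw [← hmulext, hextx]; exact hxmul
  have hker1 : ∀ y, N.mulVec y = 0 → ∃ c : ℝ, y = c • x' := by
    intro y hy
    obtain ⟨c, hc⟩ := hone (ext y) (by rw [hmulext]; exact hy)
      (fun j hj => hext0 y j (fun hmem => ((hmemS j).mp hmem) hj))
    refine ⟨c, funext fun k => ?_⟩
    have := congrFun hc (g k)
    rw [hextg] at this
    simpa [hx'def] using this
  have hx'0 : x' ≠ 0 := by
    intro h
    exact hxg 0 (by simpa [hx'def] using congrFun h 0)
  -- rank computations
  have hkereq : LinearMap.ker N.mulVecLin = span ℝ {x'} := by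
    ext y
    rw [LinearMap.mem_ker, mem_span_singleton]
    constructor
    · intro hy
      obtain ⟨c, hc⟩ := hker1 y hy
      exact ⟨c, hc.symm⟩
    · rintro ⟨c, rfl⟩
      show N.mulVec (c • x') = 0
      rw [Matrix.mulVec_smul, hx'ker, smul_zero]
  have hrows : finrank ℝ (span ℝ (Set.range (fun i => N i))) = d := by
    have h1 : finrank ℝ (LinearMap.ker N.mulVecLin) = 1 := by
      rw [hkereq]; exact finrank_span_singleton hx'0
    have h2 := LinearMap.finrank_range_add_finrank_ker N.mulVecLin
    rw [h1, Module.finrank_pi] at h2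
    simp only [Fintype.card_fin] at h2
    have h3 : N.rank = d := by
      show finrank ℝ (LinearMap.range N.mulVecLin) = d
      omega
    rw [show (fun i => N i) = N from rfl]
    exact (Matrix.rank_eq_finrank_span_row N).symm.trans h3
  -- choose d linearly independent rows spanning the row space
  obtain ⟨t, htsub, htspan, htind⟩ := exists_linearIndependent ℝ (Set.range (fun i => N i))
  have htfin : t.Finite := htind.setFinite
  haveI : Fintype t := htfin.fintype
  have htcard : t.toFinset.card = d := by
    have hh := finrank_span_set_eq_card htind
    rw [htspan, hrows] at hh
    exact hh.symm
  set eT := Finset.equivFinOfCardEq htcard with heT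
  set q : Fin d → (Fin (d+1) → ℝ) := fun i => ((eT.symm i : {v // v ∈ t.toFinset}) : Fin (d+1) → ℝ)
    with hqdef
  have hqt : ∀ i, q i ∈ t := fun i => Set.mem_toFinset.mp (eT.symm i).2
  have hqsurj : ∀ v ∈ t, ∃ i, q i = v := by
    intro v hv
    refine ⟨eT ⟨v, Set.mem_toFinset.mpr hv⟩, ?_⟩
    simp [hqdef]
  have hrowpick : ∀ i : Fin d, ∃ r : Fin m, N r = q i := fun i => htsub (hqt i)
  choose frow hfrow using hrowpick
  set B : Matrix (Fin d) (Fin (d+1)) ℝ := N.submatrix frow id with hBdef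
  have hBrow : ∀ i, B i = q i := fun i => hfrow i
  have hkerB : ∀ y, B.mulVec y = 0 → ∃ c : ℝ, y = c • x' := by
    intro y hy
    apply hker1
    set φ : (Fin (d+1) → ℝ) →ₗ[ℝ] ℝ :=
      { toFun := fun w => w ⬝ᵥ y
        map_add' := fun a b => add_dotProduct a b y
        map_smul' := fun c a => smul_dotProduct c a y } with hφ
    have hspanle : span ℝ (Set.range (fun i => N i)) ≤ LinearMap.ker φ := by
      rw [← htspan, span_le]
      intro v hv
      obtain ⟨i, rfl⟩ := hqsurj v hv
      show q i ⬝ᵥ y = 0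
      rw [← hBrow i]
      exact congrFun hy i
    funext i
    have : N i ∈ span ℝ (Set.range (fun i => N i)) :=
      subset_span (Set.mem_range_self i)
    exact hspanle this
  -- the cofactor vector
  set v0 : Fin (d+1) → ℝ :=
    fun j => (-1 : ℝ)^(j : ℕ) * (B.submatrix id j.succAbove).det with hv0def
  have hBv0 : B.mulVec v0 = 0 := by
    funext i
    show ∑ j, B i j * v0 j = 0
    set C : Matrix (Fin (d+1)) (Fin (d+1)) ℝ := Fin.cons (B i) B with hCdef
    have hC0 : C 0 = B i := rfl
    have hCsucc : ∀ a, C a.succ = B a := fun a => by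
      rw [hCdef]; exact Fin.cons_succ (α := fun _ => Fin (d+1) → ℝ) (B i) B a
    have hCdet : C.det = 0 :=
      Matrix.det_zero_of_row_eq (Fin.succ_ne_zero i).symm (by rw [hC0, hCsucc])
    rw [Matrix.det_succ_row_zero] at hCdet
    rw [← hCdet]
    refine Finset.sum_congr rfl (fun j _ => ?_)
    have hsub : C.submatrix Fin.succ j.succAbove = B.submatrix id j.succAbove := by
      ext a b
      simp [Matrix.submatrix_apply, hCsucc]
    rw [hsub, hC0]
    simp [hv0def]
    ring
  have hv0sign : ∀ j, v0 j = 0 ∨ |v0 j| = 1 := by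
    intro j
    have hsub : B.submatrix id j.succAbove = A.submatrix frow (g ∘ j.succAbove) := by
      ext a b
      simp [hBdef, hNdef, Matrix.submatrix_apply]
    have := (A.isTotallyUnimodular_iff).mp hA d frow (g ∘ j.succAbove)
    rw [← hsub] at this
    obtain ⟨s, hs⟩ := this
    have habs : |(B.submatrix id j.succAbove).det| = 0 ∨ |(B.submatrix id j.succAbove).det| = 1 := by
      cases s <;> simp [← hs]
    rcases habs with h | h
    · left
      simp only [hv0def]
      rw [abs_eq_zero] at h
      rw [h, mul_zero]
    · right
      simp only [hv0def, abs_mul, abs_pow, abs_neg, abs_one, one_pow, one_mul]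
      exact h
  have hv00 : v0 0 ≠ 0 := by
    have hD : (B.submatrix id (Fin.succAbove 0)).det ≠ 0 := by
      intro hdet
      obtain ⟨w, hw0, hw⟩ := (Matrix.exists_mulVec_eq_zero_iff).mpr hdet
      set wext : Fin (d+1) → ℝ := Fin.cons 0 w with hwext
      have hBw : B.mulVec wext = 0 := by
        funext i
        have hDi : ∑ k, B i (Fin.succ k) * w k = 0 := by
          have h2 : ∑ k, B i (Fin.succ k) * w k
              = (B.submatrix id (Fin.succAbove 0)).mulVec w i := by
            show _ = ∑ k, (B.submatrix id (Fin.succAbove 0)) i k * w k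
            refine Finset.sum_congr rfl (fun k _ => ?_)
            simp [Matrix.submatrix_apply, Fin.succAbove_zero]
          rw [h2, hw]
          rfl
        show ∑ j, B i j * wext j = 0
        rw [Fin.sum_univ_succ]
        have h0 : wext 0 = 0 := rfl
        rw [h0, mul_zero, zero_add]
        rw [← hDi]
        refine Finset.sum_congr rfl (fun k _ => ?_)
        rw [show wext k.succ = w k from Fin.cons_succ _ _ _]
      obtain ⟨c, hc⟩ := hkerB wext hBw
      have hc0 : (0:ℝ) = c * x' 0 := by
        have h := congrFun hc 0
        rw [show wext 0 = 0 from rfl] at h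
        exact h
      have hcz : c = 0 := by
        rcases mul_eq_zero.mp hc0.symm with h | h
        · exact h
        · exact absurd h (hxg 0)
      apply hw0
      funext k
      have hk := congrFun hc k.succ
      have hcons : wext k.succ = w k := Fin.cons_succ _ _ _
      rw [hcons] at hk
      rw [hk, hcz]
      simp
    have hvv : v0 0 = (B.submatrix id (Fin.succAbove 0)).det := by
      simp only [hv0def, Fin.val_zero, pow_zero, one_mul]
    rw [hvv]
    exact hD
  -- conclude
  obtain ⟨c, hc⟩ := hkerB v0 hBv0
  have hcne : c ≠ 0 := by
    intro h
    apply hv00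
    rw [congrFun hc 0, h]
    simp
  refine ⟨|c|⁻¹, by positivity, fun j hj => ?_⟩
  have hjS : j ∈ S := (hmemS j).mpr hj
  set k := e.symm ⟨j, hjS⟩ with hk
  have hgk : g k = j := by
    show ((e (e.symm ⟨j, hjS⟩)) : Fin n) = j
    rw [e.apply_symm_apply]
  have hxk : x j = x' k := by rw [hx'def]; simp [hgk]
  have hv0k : |v0 k| = 1 := by
    rcases hv0sign k with h | h
    · exfalso
      have := congrFun hc k
      rw [h] at this
      have : c * x' k = 0 := by simpa using this.symm
      rcases mul_eq_zero.mp this with h' | h'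
      · exact hcne h'
      · exact hxg k h'
    · exact h
  have := congrFun hc k
  have habs : |c| * |x' k| = 1 := by
    rw [← abs_mul]
    rw [show c * x' k = v0 k from (by simpa using this.symm)]
    exact hv0k
  rw [hxk]
  field_simp at habs ⊢
  linarith [habs]

lemma conforms_trans {x y z : Fin n → ℝ} (h1 : Conforms x y) (h2 : Conforms y z) :
    Conforms x z := by
  intro j hj
  have hxy := h1 j hj
  have hyj : y j ≠ 0 := by
    intro h; rw [h, mul_zero] at hxy; exact lt_irrefl _ hxy
  have hyz := h2 j hyj
  nlinarith [mul_pos hxy hyz, mul_self_pos.mpr hyj]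


lemma exists_primitive_conform {V : Submodule ℝ (Fin n → ℝ)} (hV : IsRegularSpace V) :
    ∀ (x : Fin n → ℝ), x ∈ V → x ≠ 0 →
    ∃ p, IsPrimitive V p ∧ Conforms p x ∧ ∀ j, x j = 0 → p j = 0 := by
  classical
  obtain ⟨m, A, hA, rfl⟩ := hV
  set V := LinearMap.ker A.mulVecLin with hVdef
  suffices H : ∀ (N : ℕ) (x : Fin n → ℝ), (Finset.univ.filter (fun j => x j ≠ 0)).card ≤ N →
      x ∈ V → x ≠ 0 →
      ∃ p, IsPrimitive V p ∧ Conforms p x ∧ ∀ j, x j = 0 → p j = 0 by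
    intro x hx hx0
    exact H _ x le_rfl hx hx0
  intro N
  induction N with
  | zero =>
    intro x hcard hxV hx0
    exfalso
    apply hx0
    funext j
    by_contra hj
    have hj' : x j ≠ 0 := fun h => hj (by rw [h]; rfl)
    have : j ∈ Finset.univ.filter (fun j => x j ≠ 0) := by simp [hj']
    have := Finset.card_pos.mpr ⟨j, this⟩
    omega
  | succ N ih =>
    intro x hcard hxV hx0
    by_cases helem : IsElementary V x
    · -- elementary case: rescale
      obtain ⟨a, ha, habs⟩ := elem_abs_const hA helem
      refine ⟨a⁻¹ • x, ⟨⟨?_, ?_, ?_⟩, ?_⟩, ?_, ?_⟩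
      · exact Submodule.smul_mem _ _ hxV
      · exact smul_ne_zero (inv_ne_zero ha.ne') hx0
      · have hsupp : supp (a⁻¹ • x) = supp x := by
          ext j
          simp only [supp, Set.mem_setOf_eq, Pi.smul_apply, smul_eq_mul]
          constructor
          · intro h hx; exact h (by rw [hx, mul_zero])
          · intro h; exact mul_ne_zero (inv_ne_zero ha.ne') h
        rw [hsupp]
        exact helem.2.2
      · intro j
        simp only [Pi.smul_apply, smul_eq_mul, Set.mem_insert_iff, Set.mem_singleton_iff]
        by_cases hj : x j = 0
        · right; left; rw [hj, mul_zero]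
        · have h1 : |a⁻¹ * x j| = 1 := by
            rw [abs_mul, abs_inv, abs_of_pos ha, habs j hj]
            field_simp
          rcases (abs_eq (by norm_num : (0:ℝ) ≤ 1)).mp h1 with h | h
          · right; right; exact h
          · left; exact h
      · intro j hj
        have hxj : x j ≠ 0 := by
          intro h
          apply hj
          simp [h]
        have : (a⁻¹ • x) j * x j = a⁻¹ * (x j * x j) := by
          simp [mul_assoc]
        rw [this]
        exact mul_pos (inv_pos.mpr ha) (mul_self_pos.mpr hxj)
      · intro j hj
        simp [hj]
    · -- non-elementary: cancel against a smaller-support vector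
      obtain ⟨y, hyV, hy0, hysub⟩ : ∃ y ∈ V, y ≠ 0 ∧ supp y ⊂ supp x := by
        by_contra h
        push_neg at h
        exact helem ⟨hxV, hx0, fun y hy hy0 => h y hy hy0⟩
      have hysupp : ∀ j, x j = 0 → y j = 0 := by
        intro j hj
        by_contra hyj
        exact ((hysub.1 : supp y ⊆ supp x) hyj) hj
      set T := Finset.univ.filter (fun j => y j ≠ 0) with hT
      have hTne : T.Nonempty := by
        by_contra h
        rw [Finset.not_nonempty_iff_eq_empty] at h
        apply hy0
        funext j
        by_contra hj
        have hj' : y j ≠ 0 := fun hh => hj (by rw [hh]; rfl)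
        have : j ∈ T := by simp [hT, hj']
        simp [h] at this
      obtain ⟨js, hjsT, hjsmin⟩ := T.exists_min_image (fun j => |x j| / |y j|) hTne
      have hyjs : y js ≠ 0 := by simpa [hT] using hjsT
      have hxjs : x js ≠ 0 := fun h => hyjs (hysupp js h)
      set t := x js / y js with ht
      set x1 := x - t • y with hx1
      have hx1V : x1 ∈ V := sub_mem hxV (Submodule.smul_mem _ _ hyV)
      have hx1app : ∀ j, x1 j = x j - t * y j := fun j => rfl
      have hzero : ∀ j, x j = 0 → x1 j = 0 := by
        intro j hj
        rw [hx1app, hj, hysupp j hj, mul_zero, sub_zero]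
      have hty : ∀ j, |t * y j| ≤ |x j| := by
        intro j
        by_cases hyj : y j = 0
        · rw [hyj, mul_zero, abs_zero]; exact abs_nonneg _
        · have hjT : j ∈ T := by simp [hT, hyj]
          have := hjsmin j hjT
          have htabs : |t| = |x js| / |y js| := by rw [ht, abs_div]
          have hyabs : 0 < |y j| := abs_pos.mpr hyj
          rw [abs_mul]
          calc |t| * |y j| = (|x js| / |y js|) * |y j| := by rw [htabs]
            _ ≤ (|x j| / |y j|) * |y j| := by
                apply mul_le_mul_of_nonneg_right this (abs_nonneg _)
            _ = |x j| := by field_simp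
      have hconf1 : Conforms x1 x := by
        intro j hj
        have hxj : x j ≠ 0 := fun h => hj (hzero j h)
        have h2 : t * y j * x j ≤ |t * y j| * |x j| := by
          calc t * y j * x j ≤ |t * y j * x j| := le_abs_self _
            _ = |t * y j| * |x j| := abs_mul _ _
        have h3 : |t * y j| * |x j| ≤ |x j| * |x j| :=
          mul_le_mul_of_nonneg_right (hty j) (abs_nonneg _)
        have h4 : |x j| * |x j| = x j * x j := abs_mul_abs_self _
        have h5 : x1 j * x j ≥ 0 := by rw [hx1app]; nlinarith
        rcases h5.lt_or_eq with h | h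
        · exact h
        · exact absurd (mul_eq_zero.mp h.symm) (by push_neg; exact ⟨hj, hxj⟩)
      have hx1js : x1 js = 0 := by
        rw [hx1app, ht]
        field_simp
        ring
      have hx1ne : x1 ≠ 0 := by
        obtain ⟨j0, hj0x, hj0y⟩ := Set.exists_of_ssubset hysub
        intro h
        have : x1 j0 = 0 := by rw [h]; rfl
        rw [hx1app] at this
        have hyj0 : y j0 = 0 := by_contra fun hc => hj0y hc
        rw [hyj0, mul_zero, sub_zero] at this
        exact hj0x this
      have hcard1 : (Finset.univ.filter (fun j => x1 j ≠ 0)).card ≤ N := by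
        have hsub : Finset.univ.filter (fun j => x1 j ≠ 0) ⊆
            (Finset.univ.filter (fun j => x j ≠ 0)).erase js := by
          intro j hj
          simp only [Finset.mem_filter, Finset.mem_univ, true_and] at hj
          rw [Finset.mem_erase]
          constructor
          · intro h; rw [h] at hj; exact hj hx1js
          · simp only [Finset.mem_filter, Finset.mem_univ, true_and]
            exact fun h => hj (hzero j h)
        have h1 := Finset.card_le_card hsub
        have h2 : js ∈ Finset.univ.filter (fun j => x j ≠ 0) := by simp [hxjs]
        have h3 := Finset.card_erase_of_mem h2
        omega
      obtain ⟨p, hp1, hp2, hp3⟩ := ih x1 hcard1 hx1V hx1ne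
      exact ⟨p, hp1, conforms_trans hp2 hconf1, fun j hj => hp3 j (hzero j hj)⟩

lemma exists_conformal_decomp {V : Submodule ℝ (Fin n → ℝ)} (hV : IsRegularSpace V) :
    ∀ (x : Fin n → ℝ), x ∈ V →
    ∃ (k : ℕ) (α : Fin k → ℝ) (p : Fin k → (Fin n → ℝ)),
      (∀ i, 0 < α i) ∧ (∀ i, IsPrimitive V (p i)) ∧ (∀ i, Conforms (p i) x) ∧
      x = ∑ i, α i • p i := by
  classical
  suffices H : ∀ (N : ℕ) (x : Fin n → ℝ), (Finset.univ.filter (fun j => x j ≠ 0)).card ≤ N →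
      x ∈ V →
      ∃ (k : ℕ) (α : Fin k → ℝ) (p : Fin k → (Fin n → ℝ)),
      (∀ i, 0 < α i) ∧ (∀ i, IsPrimitive V (p i)) ∧ (∀ i, Conforms (p i) x) ∧
      x = ∑ i, α i • p i by
    intro x hx
    exact H _ x le_rfl hx
  intro N
  induction N with
  | zero =>
    intro x hcard hxV
    have hx0 : x = 0 := by
      funext j
      by_contra hj
      have hj' : x j ≠ 0 := fun h => hj (by rw [h]; rfl)
      have : j ∈ Finset.univ.filter (fun j => x j ≠ 0) := by simp [hj']
      have := Finset.card_pos.mpr ⟨j, this⟩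
      omega
    exact ⟨0, Fin.elim0, Fin.elim0, fun i => i.elim0, fun i => i.elim0, fun i => i.elim0,
      by simp [hx0]⟩
  | succ N ih =>
    intro x hcard hxV
    by_cases hx0 : x = 0
    · exact ⟨0, Fin.elim0, Fin.elim0, fun i => i.elim0, fun i => i.elim0, fun i => i.elim0,
        by simp [hx0]⟩
    obtain ⟨p, hpprim, hpconf, hpzero⟩ := exists_primitive_conform hV x hxV hx0
    have hp0 : p ≠ 0 := hpprim.1.2.1
    set T := Finset.univ.filter (fun j => p j ≠ 0) with hT
    have hTne : T.Nonempty := by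
      by_contra h
      rw [Finset.not_nonempty_iff_eq_empty] at h
      apply hp0
      funext j
      by_contra hj
      have hj' : p j ≠ 0 := fun hh => hj (by rw [hh]; rfl)
      have : j ∈ T := by simp [hT, hj']
      simp [h] at this
    obtain ⟨js, hjsT, hjsmin⟩ := T.exists_min_image (fun j => |x j|) hTne
    have hpjs : p js ≠ 0 := by simpa [hT] using hjsT
    have hxof : ∀ j, p j ≠ 0 → p j * x j = |x j| := by
      intro j hj
      have h1 : p j * x j > 0 := hpconf j hj
      rcases hpprim.2 j with h | h | h
      · rw [h] at h1 ⊢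
        rw [abs_of_neg (by linarith)]
        ring
      · exact absurd h hj
      · rw [h] at h1 ⊢
        rw [abs_of_pos (by linarith)]
        ring
    have hxjs : x js ≠ 0 := by
      intro h
      have := hpconf js hpjs
      rw [h, mul_zero] at this
      exact lt_irrefl _ this
    set a := |x js| with ha
    have ha0 : 0 < a := abs_pos.mpr hxjs
    set x1 := x - a • p with hx1
    have hx1app : ∀ j, x1 j = x j - a * p j := fun j => rfl
    have hx1V : x1 ∈ V := sub_mem hxV (Submodule.smul_mem _ _ hpprim.1.1)
    have hzero : ∀ j, x j = 0 → x1 j = 0 := by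
      intro j hj
      rw [hx1app, hj, hpzero j hj, mul_zero, sub_zero]
    have hx1js : x1 js = 0 := by
      rw [hx1app]
      have h1 : a * (p js * p js) = p js * x js := by
        rw [hxof js hpjs, ha]
        rcases hpprim.2 js with h | h | h
        · rw [h]; ring
        · exact absurd h hpjs
        · rw [h]; ring
      rcases hpprim.2 js with h | h | h
      · rw [h] at h1 ⊢
        nlinarith [h1]
      · exact absurd h hpjs
      · rw [h] at h1 ⊢
        nlinarith [h1]
    have hconf1 : Conforms x1 x := by
      intro j hj
      have hxj : x j ≠ 0 := fun h => hj (hzero j h)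
      by_cases hpj : p j = 0
      · rw [hx1app, hpj, mul_zero, sub_zero]
        exact mul_self_pos.mpr hxj
      · have hle : a ≤ |x j| := by
          have : j ∈ T := by simp [hT, hpj]
          exact hjsmin j this
        have h1 : x1 j * x j = x j * x j - a * (p j * x j) := by rw [hx1app]; ring
        rw [hxof j hpj] at h1
        have h2 : x j * x j = |x j| * |x j| := (abs_mul_abs_self _).symm
        have h3 : x1 j * x j ≥ 0 := by rw [h1, h2]; nlinarith
        rcases h3.lt_or_eq with h | h
        · exact h
        · exact absurd (mul_eq_zero.mp h.symm) (by push_neg; exact ⟨hj, hxj⟩)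
    have hcard1 : (Finset.univ.filter (fun j => x1 j ≠ 0)).card ≤ N := by
      have hsub : Finset.univ.filter (fun j => x1 j ≠ 0) ⊆
          (Finset.univ.filter (fun j => x j ≠ 0)).erase js := by
        intro j hj
        simp only [Finset.mem_filter, Finset.mem_univ, true_and] at hj
        rw [Finset.mem_erase]
        constructor
        · intro h; rw [h] at hj; exact hj hx1js
        · simp only [Finset.mem_filter, Finset.mem_univ, true_and]
          exact fun h => hj (hzero j h)
      have h1 := Finset.card_le_card hsub
      have h2 : js ∈ Finset.univ.filter (fun j => x j ≠ 0) := by simp [hxjs]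
      have h3 := Finset.card_erase_of_mem h2
      omega
    obtain ⟨k, α, q, hα, hqprim, hqconf, hqsum⟩ := ih x1 hcard1 hx1V
    refine ⟨k + 1, Fin.cons a α, Fin.cons p q, ?_, ?_, ?_, ?_⟩
    · intro i
      rcases Fin.eq_zero_or_eq_succ i with rfl | ⟨i', rfl⟩
      · rw [Fin.cons_zero]; exact ha0
      · rw [Fin.cons_succ]; exact hα i'
    · intro i
      rcases Fin.eq_zero_or_eq_succ i with rfl | ⟨i', rfl⟩
      · simpa using hpprim
      · simpa using hqprim i'
    · intro i
      rcases Fin.eq_zero_or_eq_succ i with rfl | ⟨i', rfl⟩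
      · simpa using hpconf
      · simpa using conforms_trans (hqconf i') hconf1
    · rw [Fin.sum_univ_succ]
      simp only [Fin.cons_zero, Fin.cons_succ]
      rw [← hqsum, hx1]
      abel

theorem stmt19 (V : Submodule ℝ (Fin n → ℝ)) (hV : IsRegularSpace V)
    (r : Fin n) (c : Fin n → ℝ) (hc : ∀ j, j ≠ r → 0 ≤ c j)
    (f g P : Fin n → ℝ) (hfV : f ∈ V) (hf : Feasible c r f)
    (hP : ShortestAug V c r f P) (hg : MaxAug c r f P g) :
    ∀ Q, ShortestAug V c r g Q → onorm P ≤ onorm Q := by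
  classical
  intro Q hQ
  obtain ⟨⟨⟨hPprim, hPr⟩, εP, hεP, hfeasP⟩, hPmin⟩ := hP
  obtain ⟨⟨⟨hQprim, hQr⟩, δ, hδ, hfeasQ⟩, -⟩ := hQ
  obtain ⟨ε, hε, hgdef, hgfeas, -⟩ := hg
  have hPV : P ∈ V := hPprim.1.1
  have hQV : Q ∈ V := hQprim.1.1
  obtain ⟨k, α, p, hα, hprim, hconf, hsum⟩ := exists_conformal_decomp hV (P + Q)
    (add_mem hPV hQV)
  have hWapp : ∀ j, (P + Q) j = P j + Q j := fun j => rfl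
  have hWr : (P + Q) r = 2 := by rw [hWapp, hPr, hQr]; norm_num
  have hsumapp : ∀ j, (P + Q) j = ∑ i, α i * p i j := by
    intro j
    rw [congrFun hsum j]
    rw [Finset.sum_apply]
    rfl
  -- values at r
  have hpr01 : ∀ i, p i r = 0 ∨ p i r = 1 := by
    intro i
    rcases (hprim i).2 r with h | h | h
    · exfalso
      have := hconf i r (by rw [h]; norm_num)
      rw [h, hWr] at this
      linarith
    · exact Or.inl h
    · exact Or.inr h
  -- strict slack
  have hgapp : ∀ j, g j = f j + ε * P j := by intro j; rw [hgdef]; rfl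
  have hgQapp : ∀ j, (g + δ • Q) j = g j + δ * Q j := fun j => rfl
  have hslackpos : ∀ j, j ≠ r → (P + Q) j > 0 → f j < c j := by
    intro j hj hW
    rw [hWapp] at hW
    have h1 := hgfeas j hj
    have h2 := hfeasQ j hj
    rw [hgQapp, hgapp] at h2
    rw [hgapp] at h1
    rcases hPprim.2 j with h | h | h <;> rcases hQprim.2 j with h' | h' | h' <;>
      (rw [h, h'] at hW; rw [h] at h1; rw [h, h'] at h2; linarith)
  have hslackneg : ∀ j, j ≠ r → (P + Q) j < 0 → 0 < f j := by
    intro j hj hW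
    rw [hWapp] at hW
    have h1 := hgfeas j hj
    have h2 := hfeasQ j hj
    rw [hgQapp, hgapp] at h2
    rw [hgapp] at h1
    rcases hPprim.2 j with h | h | h <;> rcases hQprim.2 j with h' | h' | h' <;>
      (rw [h, h'] at hW; rw [h] at h1; rw [h, h'] at h2; linarith)
  -- each r-path in the decomposition is augmenting for f
  have haug : ∀ i, p i r = 1 → Augmenting V c r f (p i) := by
    intro i hir
    refine ⟨⟨hprim i, hir⟩, ?_⟩
    set T := Finset.univ.filter (fun j => j ≠ r ∧ p i j ≠ 0) with hT
    set s : Finset ℝ := insert (1:ℝ) (T.image (fun j => if 0 < p i j then c j - f j else f j))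
      with hs
    have hsne : s.Nonempty := Finset.insert_nonempty _ _
    set εi := s.min' hsne with hεi
    have hWconf : ∀ j, p i j ≠ 0 → p i j * (P + Q) j > 0 := hconf i
    have hεipos : 0 < εi := by
      rw [hεi]
      rw [Finset.lt_min'_iff]
      intro y hy
      rw [hs, Finset.mem_insert] at hy
      rcases hy with rfl | hy
      · norm_num
      · obtain ⟨j, hjT, rfl⟩ := Finset.mem_image.mp hy
        rw [hT] at hjT
        simp only [Finset.mem_filter, Finset.mem_univ, true_and] at hjT
        obtain ⟨hjr, hjp⟩ := hjT
        rcases (hprim i).2 j with h | h | h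
        · have hWj : (P + Q) j < 0 := by
            have := hWconf j hjp
            rw [h] at this
            linarith
          rw [if_neg (by rw [h]; norm_num)]
          exact hslackneg j hjr hWj
        · exact absurd h hjp
        · have hWj : (P + Q) j > 0 := by
            have := hWconf j hjp
            rw [h] at this
            linarith
          rw [if_pos (by rw [h]; norm_num)]
          have := hslackpos j hjr hWj
          linarith
    refine ⟨εi, hεipos, ?_⟩
    intro j hj
    have happ : (f + εi • p i) j = f j + εi * p i j := rfl
    have hfj := hf j hj
    by_cases hpj : p i j = 0
    · rw [happ, hpj, mul_zero, add_zero]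
      exact hfj
    · have hjT : j ∈ T := by
        rw [hT]; simp only [Finset.mem_filter, Finset.mem_univ, true_and]
        exact ⟨hj, hpj⟩
      have hmem : (if 0 < p i j then c j - f j else f j) ∈ s := by
        rw [hs]
        exact Finset.mem_insert_of_mem (Finset.mem_image_of_mem _ hjT)
      have hle := Finset.min'_le s _ hmem
      rw [← hεi] at hle
      rcases (hprim i).2 j with h | h | h
      · rw [if_neg (by rw [h]; norm_num)] at hle
        rw [happ, h]
        constructor
        · linarith
        · linarith
      · exact absurd h hpj
      · rw [if_pos (by rw [h]; norm_num)] at hle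
        rw [happ, h]
        constructor
        · linarith
        · linarith
  have hlen : ∀ i, p i r = 1 → onorm P ≤ onorm (p i) := fun i h => hPmin _ (haug i h)
  -- conformal additivity of the 1-norm
  have habs : ∀ j, |(P + Q) j| = ∑ i, α i * |p i j| := by
    intro j
    rcases lt_trichotomy ((P + Q) j) 0 with hW | hW | hW
    · have hple : ∀ i, p i j ≤ 0 := by
        intro i
        by_contra h
        push_neg at h
        have := hconf i j (ne_of_gt h)
        nlinarith
      rw [abs_of_neg hW, hsumapp, ← Finset.sum_neg_distrib]
      refine Finset.sum_congr rfl (fun i _ => ?_)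
      rw [abs_of_nonpos (hple i)]
      ring
    · rw [hW, abs_zero]
      have : ∀ i, p i j = 0 := by
        intro i
        by_contra h
        have := hconf i j h
        rw [hW, mul_zero] at this
        exact lt_irrefl _ this
      rw [eq_comm]
      refine Finset.sum_eq_zero (fun i _ => ?_)
      rw [this i, abs_zero, mul_zero]
    · have hpge : ∀ i, 0 ≤ p i j := by
        intro i
        by_contra h
        push_neg at h
        have := hconf i j (ne_of_lt h)
        nlinarith
      rw [abs_of_pos hW, hsumapp]
      refine Finset.sum_congr rfl (fun i _ => ?_)
      rw [abs_of_nonneg (hpge i)]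
  have hWnorm : onorm (P + Q) = ∑ i, α i * onorm (p i) := by
    unfold onorm
    calc ∑ j, |(P + Q) j| = ∑ j, ∑ i, α i * |p i j| :=
        Finset.sum_congr rfl (fun j _ => habs j)
      _ = ∑ i, ∑ j, α i * |p i j| := Finset.sum_comm
      _ = ∑ i, α i * ∑ j, |p i j| :=
        Finset.sum_congr rfl (fun i _ => (Finset.mul_sum _ _ _).symm)
  have hsumr : ∑ i, α i * p i r = 2 := by rw [← hsumapp r, hWr]
  have honn : ∀ z : Fin n → ℝ, 0 ≤ onorm z :=
    fun z => Finset.sum_nonneg (fun j _ => abs_nonneg _)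
  have hkey : 2 * onorm P ≤ onorm (P + Q) := by
    have hstep : ∑ i, (α i * p i r) * onorm P ≤ ∑ i, α i * onorm (p i) := by
      refine Finset.sum_le_sum (fun i _ => ?_)
      rcases hpr01 i with h | h
      · rw [h, mul_zero, zero_mul]
        exact mul_nonneg (le_of_lt (hα i)) (honn _)
      · rw [h, mul_one]
        exact mul_le_mul_of_nonneg_left (hlen i h) (le_of_lt (hα i))
    calc 2 * onorm P = (∑ i, α i * p i r) * onorm P := by rw [hsumr]
      _ = ∑ i, (α i * p i r) * onorm P := Finset.sum_mul _ _ _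
      _ ≤ ∑ i, α i * onorm (p i) := hstep
      _ = onorm (P + Q) := hWnorm.symm
  have htri : onorm (P + Q) ≤ onorm P + onorm Q := by
    unfold onorm
    rw [← Finset.sum_add_distrib]
    exact Finset.sum_le_sum (fun j _ => by rw [hWapp]; exact abs_add_le _ _)
  linarith
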